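/- arXiv:0707.0813 — 3 statements merged into one kernel-verified Lean document; each statement's English description precedes it below -/
import Mathlib

section
/- Let q ≥ 1 be a real number, Λ a finite set, φ and ψ nonnegative real-valued functions on Λ, and z* ∈ Λ a point where φ attains its maximum. Then (φ(z*) + Σ_{z∈Λ} ψ(z))^q + Σ_{z∈Λ, z≠z*} φ(z)^q ≥ Σ_{z∈Λ} (φ(z) + ψ(z))^q. -/
/-- Key convexity inequality: for `q ≥ 1`, `0 ≤ a ≤ b`, `0 ≤ t`,
`(a+t)^q - a^q ≤ (b+t)^q - b^q`. -/
lemma key_incr (q a b t : ℝ) (hq : 1 ≤ q) (ha : 0 ≤ a) (hab : a ≤ b) (ht : 0 ≤ t) :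
    (a + t) ^ q - a ^ q ≤ (b + t) ^ q - b ^ q := by
  rcases eq_or_lt_of_le (by linarith : a ≤ b + t) with h | h
  · have hb : b = a := le_antisymm (by linarith) hab
    have ht0 : t = 0 := by linarith
    simp [hb, ht0]
  have hd : 0 < b + t - a := by linarith
  set lam : ℝ := t / (b + t - a) with hlam
  have hlam0 : 0 ≤ lam := div_nonneg ht hd.le
  have hlam1 : lam ≤ 1 := by
    rw [hlam, div_le_one hd]; linarith
  have hconv := convexOn_rpow hq
  have h1 : b ^ q ≤ lam * a ^ q + (1 - lam) * (b + t) ^ q := by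
    have := hconv.2 (Set.mem_Ici.2 ha) (Set.mem_Ici.2 (by linarith : (0:ℝ) ≤ b + t))
      hlam0 (by linarith : (0:ℝ) ≤ 1 - lam) (by ring)
    have heq : lam * a + (1 - lam) * (b + t) = b := by
      rw [hlam]; field_simp; ring
    simp only [smul_eq_mul] at this
    rwa [heq] at this
  have h2 : (a + t) ^ q ≤ (1 - lam) * a ^ q + lam * (b + t) ^ q := by
    have := hconv.2 (Set.mem_Ici.2 ha) (Set.mem_Ici.2 (by linarith : (0:ℝ) ≤ b + t))
      (by linarith : (0:ℝ) ≤ 1 - lam) hlam0 (by ring)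
    have heq : (1 - lam) * a + lam * (b + t) = a + t := by
      rw [hlam]; field_simp; ring
    simp only [smul_eq_mul] at this
    rwa [heq] at this
  nlinarith [h1, h2]

lemma sum_incr {α : Type*} [DecidableEq α] (φ ψ : α → ℝ) (q : ℝ)
    (hq : 1 ≤ q) (hφ : ∀ z, 0 ≤ φ z) (hψ : ∀ z, 0 ≤ ψ z) (M : ℝ) (hM : 0 ≤ M) :
    ∀ s : Finset α, (∀ z ∈ s, φ z ≤ M) →
      ∑ z ∈ s, ((φ z + ψ z) ^ q - φ z ^ q) ≤ (M + ∑ z ∈ s, ψ z) ^ q - M ^ q := by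
  intro s
  induction s using Finset.induction_on with
  | empty => simp
  | @insert a s hx ih =>
    intro hbd
    rw [Finset.sum_insert hx, Finset.sum_insert hx]
    have hre := ih (fun z hz => hbd z (Finset.mem_insert_of_mem hz))
    have hsum : 0 ≤ ∑ z ∈ s, ψ z := Finset.sum_nonneg fun z _ => hψ z
    have hkey := key_incr q (φ a) (M + ∑ z ∈ s, ψ z) (ψ a) hq (hφ a)
      (by have := hbd a (Finset.mem_insert_self a s); linarith) (hψ a)
    have : (M + ∑ z ∈ s, ψ z + ψ a) = M + (ψ a + ∑ z ∈ s, ψ z) := by ring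
    linarith [hkey, hre, this ▸ hkey]

/-- If `q ≥ 1`, `φ, ψ` are nonnegative functions on a finite set `Λ`, and `z*` is a
point of `Λ` where `φ` attains its maximum, then
`(φ z* + ∑_{z∈Λ} ψ z)^q + ∑_{z∈Λ, z≠z*} (φ z)^q ≥ ∑_{z∈Λ} (φ z + ψ z)^q`. -/
theorem stmt0 {α : Type*} [DecidableEq α] (Λ : Finset α) (φ ψ : α → ℝ) (q : ℝ)
    (hq : 1 ≤ q) (hφ : ∀ z, 0 ≤ φ z) (hψ : ∀ z, 0 ≤ ψ z)
    (zs : α) (hzs : zs ∈ Λ) (hmax : ∀ z ∈ Λ, φ z ≤ φ zs) :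
    ∑ z ∈ Λ, (φ z + ψ z) ^ q ≤
      (φ zs + ∑ z ∈ Λ, ψ z) ^ q + ∑ z ∈ Λ.erase zs, (φ z) ^ q := by
  have h := sum_incr φ ψ q hq hφ hψ (φ zs) (hφ zs) Λ hmax
  rw [Finset.sum_sub_distrib] at h
  have hsplit : ∑ z ∈ Λ, (φ z) ^ q = (φ zs) ^ q + ∑ z ∈ Λ.erase zs, (φ z) ^ q :=
    (Finset.add_sum_erase Λ (fun z => (φ z) ^ q) hzs).symm
  linarith
end

section
/- Let n > m ≥ 0 be integers, Ω_{n,m} the set of binary strings of length n+m with exactly n ones, and Ω_{m,n} the set with exactly m ones. Then there exists a bijection φ : Ω_{n,m} → Ω_{m,n} such that for every η ∈ Ω_{n,m}, φ(η)(i) ≤ η(i) for all coordinates i. -/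
/-- `OmegaStr N k` is the set of binary strings of length `N` with exactly `k` ones. -/
def OmegaStr (N k : ℕ) : Finset (Fin N → Fin 2) :=
  Finset.univ.filter (fun η => ∑ i, ((η i : ℕ)) = k)

open Finset

lemma count_supersets {N n m : ℕ} (hN : N = n + m) (hmn : m ≤ n)
    (T : Finset (Fin N)) (hT : T.card = m)
    (s : Finset {S : Finset (Fin N) // S.card = n}) :
    (s.filter (fun S => T ⊆ S.1)).card ≤ n.choose (n - m) := by
  have hcompl : (Tᶜ : Finset (Fin N)).card = n := by
    rw [card_compl, hT, Fintype.card_fin, hN]; omega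
  have := Finset.card_le_card_of_injOn (f := fun S : {S : Finset (Fin N) // S.card = n} => S.1 \ T)
    (s := s.filter (fun S => T ⊆ S.1)) (t := Tᶜ.powersetCard (n - m)) ?_ ?_
  · calc (s.filter (fun S => T ⊆ S.1)).card ≤ (Tᶜ.powersetCard (n - m)).card := this
      _ = n.choose (n - m) := by rw [card_powersetCard, hcompl]
  · intro S hS
    simp only [mem_coe, mem_filter] at hS
    rw [mem_coe, mem_powersetCard]
    constructor
    · intro i hi
      simp only [mem_sdiff] at hi
      simp [hi.2]
    · rw [card_sdiff_of_subset hS.2, S.2, hT]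
  · intro S hS S' hS' hEq
    simp only [coe_filter, Set.mem_setOf_eq] at hS hS'
    apply Subtype.ext
    have h1 := Finset.sdiff_union_of_subset hS.2
    have h2 := Finset.sdiff_union_of_subset hS'.2
    rw [← h1, ← h2]
    exact congrArg (· ∪ T) hEq

lemma hall_finsets (n m : ℕ) (hmn : m ≤ n) :
    ∃ f : {S : Finset (Fin (n + m)) // S.card = n} → Finset (Fin (n + m)),
      Function.Injective f ∧ ∀ S, f S ∈ S.1.powersetCard m := by
  rw [← Finset.all_card_le_biUnion_card_iff_existsInjective']
  intro s
  set t : {S : Finset (Fin (n + m)) // S.card = n} → Finset (Finset (Fin (n + m))) :=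
    fun S => S.1.powersetCard m with ht
  have hpos : 0 < n.choose m := Nat.choose_pos hmn
  have key : s.card * n.choose m ≤ (s.biUnion t).card * n.choose m := by
    have hchoose : n.choose (n - m) = n.choose m := Nat.choose_symm hmn
    calc s.card * n.choose m = ∑ S ∈ s, (t S).card := by
            rw [Finset.sum_congr rfl (fun S _ => by rw [ht, card_powersetCard, S.2]),
              Finset.sum_const, smul_eq_mul]
      _ ≤ ∑ S ∈ s, ((s.biUnion t).filter (fun T => T ⊆ S.1)).card := by
            apply Finset.sum_le_sum
            intro S hS
            apply Finset.card_le_card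
            intro T hT
            rw [mem_filter]
            exact ⟨Finset.mem_biUnion.mpr ⟨S, hS, hT⟩, (mem_powersetCard.mp hT).1⟩
      _ = ∑ S ∈ s, ∑ T ∈ s.biUnion t, (if T ⊆ S.1 then 1 else 0) :=
            Finset.sum_congr rfl fun S _ => Finset.card_filter _ _
      _ = ∑ T ∈ s.biUnion t, ∑ S ∈ s, (if T ⊆ S.1 then 1 else 0) := Finset.sum_comm
      _ = ∑ T ∈ s.biUnion t, (s.filter (fun S => T ⊆ S.1)).card :=
            Finset.sum_congr rfl fun T _ => (Finset.card_filter _ _).symm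
      _ ≤ ∑ T ∈ s.biUnion t, n.choose (n - m) := by
            apply Finset.sum_le_sum
            intro T hT
            obtain ⟨S, _, hTS⟩ := Finset.mem_biUnion.mp hT
            exact count_supersets rfl hmn T (mem_powersetCard.mp hTS).2 s
      _ = (s.biUnion t).card * n.choose m := by
            rw [Finset.sum_const, smul_eq_mul, hchoose]
  exact Nat.le_of_mul_le_mul_right key hpos

lemma mem_OmegaStr_iff {N k : ℕ} (η : Fin N → Fin 2) :
    η ∈ OmegaStr N k ↔ (Finset.univ.filter (fun i => η i = 1)).card = k := by
  rw [OmegaStr, mem_filter]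
  simp only [mem_univ, true_and]
  rw [Finset.card_filter]
  constructor <;> intro hh <;> rw [← hh] <;> apply Finset.sum_congr rfl <;>
    intro i _ <;> have : ∀ x : Fin 2, (x : ℕ) = if x = 1 then 1 else 0 := by decide
  · exact (this (η i)).symm
  · exact this (η i)

/-- equivalence between strings with k ones and card-k subsets -/
def omegaEquiv (N k : ℕ) :
    {η // η ∈ OmegaStr N k} ≃ {S : Finset (Fin N) // S.card = k} where
  toFun η := ⟨Finset.univ.filter (fun i => η.1 i = 1), (mem_OmegaStr_iff η.1).mp η.2⟩
  invFun S := ⟨fun i => if i ∈ S.1 then 1 else 0, by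
    rw [mem_OmegaStr_iff]
    have heq : Finset.univ.filter (fun i => (if i ∈ S.1 then (1 : Fin 2) else 0) = 1) = S.1 := by
      ext i
      simp only [mem_filter, mem_univ, true_and]
      constructor
      · intro hh; by_contra hc; simp [hc] at hh
      · intro hh; simp [hh]
    rw [heq, S.2]⟩
  left_inv η := by
    apply Subtype.ext
    funext i
    simp only [mem_filter, mem_univ, true_and]
    have : ∀ x : Fin 2, (if x = 1 then (1 : Fin 2) else 0) = x := by decide
    exact this (η.1 i)
  right_inv S := by
    apply Subtype.ext
    ext i
    simp only [mem_filter, mem_univ, true_and]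
    constructor
    · intro hh; by_contra hc; simp [hc] at hh
    · intro hh; simp [hh]

/-- For `n > m`, there is a bijection `φ : Ω_{n,m} → Ω_{m,n}` such that
`φ(η) ≤ η` pointwise for every `η`. -/
theorem stmt3 (n m : ℕ) (h : m < n) :
    ∃ φ : {η // η ∈ OmegaStr (n + m) n} → {ζ // ζ ∈ OmegaStr (n + m) m},
      Function.Bijective φ ∧
      ∀ η : {η // η ∈ OmegaStr (n + m) n}, ∀ i, ((φ η).1 i : ℕ) ≤ (η.1 i : ℕ) := by
  obtain ⟨f, hfinj, hfmem⟩ := hall_finsets n m h.le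
  -- package f as a map between subtypes
  set ψ : {S : Finset (Fin (n + m)) // S.card = n} → {S : Finset (Fin (n + m)) // S.card = m} :=
    fun S => ⟨f S, (mem_powersetCard.mp (hfmem S)).2⟩ with hψ
  have hψinj : Function.Injective ψ := by
    intro a b hab
    exact hfinj (congrArg Subtype.val hab)
  have hcard : Fintype.card {S : Finset (Fin (n + m)) // S.card = n}
      = Fintype.card {S : Finset (Fin (n + m)) // S.card = m} := by
    have hc : ∀ k, Fintype.card {S : Finset (Fin (n + m)) // S.card = k} = (n + m).choose k := by
      intro k
      rw [Fintype.card_subtype]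
      have : Finset.univ.filter (fun S : Finset (Fin (n + m)) => S.card = k)
          = (Finset.univ : Finset (Fin (n + m))).powersetCard k := by
        rw [Finset.powersetCard_eq_filter, Finset.powerset_univ]
      rw [this, card_powersetCard, card_univ, Fintype.card_fin]
    rw [hc, hc]
    calc (n + m).choose n = (n + m).choose (n + m - m) := by rw [Nat.add_sub_cancel]
      _ = (n + m).choose m := Nat.choose_symm (by omega)
  have hψbij : Function.Bijective ψ :=
    (Fintype.bijective_iff_injective_and_card ψ).mpr ⟨hψinj, hcard⟩
  refine ⟨(omegaEquiv (n + m) m).symm ∘ ψ ∘ (omegaEquiv (n + m) n), ?_, ?_⟩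
  · exact ((omegaEquiv (n + m) m).symm.bijective.comp hψbij).comp
      (omegaEquiv (n + m) n).bijective
  · intro η i
    have hval : ((omegaEquiv (n + m) m).symm (ψ ((omegaEquiv (n + m) n) η))).1 i
        = (if i ∈ (ψ ((omegaEquiv (n + m) n) η)).1 then (1 : Fin 2) else 0) := rfl
    simp only [Function.comp_apply]
    rw [hval]
    by_cases hi : i ∈ (ψ ((omegaEquiv (n + m) n) η)).1
    · have hsub := (mem_powersetCard.mp (hfmem ((omegaEquiv (n + m) n) η))).1
      have hmemi : i ∈ ((omegaEquiv (n + m) n) η).1 := hsub hi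
      have hη : η.1 i = 1 := by
        simpa [omegaEquiv] using hmemi
      rw [if_pos hi, hη]
    · rw [if_neg hi]
      simp
end

section
/- Let Λ be a finite subset of ℤ^d and L a positive integer. Then there exists a partition of Λ into nonempty blocks ('L-clusters') such that any two distinct blocks C, C' satisfy dist(C, C') ≥ 4·max(diam(C), diam(C'), L), where dist and diam are taken with respect to the ℓ¹ norm. Moreover every block C satisfies diam(C) ≤ (5|Λ|)^{|Λ|} · L. -/
/-- ℓ¹ norm of a point of `ℤ^d`, as a natural number. -/
def l1norm {d : ℕ} (x : Fin d → ℤ) : ℕ := ∑ i, (x i).natAbs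

/-- ℓ¹ diameter of a finite subset of `ℤ^d`. -/
def l1diam {d : ℕ} (C : Finset (Fin d → ℤ)) : ℕ :=
  C.sup fun x => C.sup fun y => l1norm (x - y)

lemma l1norm_tri {d : ℕ} (x y z : Fin d → ℤ) :
    l1norm (x - y) ≤ l1norm (x - z) + l1norm (z - y) := by
  unfold l1norm
  rw [← Finset.sum_add_distrib]
  apply Finset.sum_le_sum
  intro i _
  have h : (x - y) i = (x - z) i + (z - y) i := by
    simp only [Pi.sub_apply]; ring
  rw [h]
  exact Int.natAbs_add_le _ _

lemma l1norm_sub_comm {d : ℕ} (x y : Fin d → ℤ) : l1norm (x - y) = l1norm (y - x) := by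
  unfold l1norm
  congr 1; funext i
  rw [Pi.sub_apply, Pi.sub_apply, ← Int.natAbs_neg, neg_sub]

lemma le_l1diam {d : ℕ} {C : Finset (Fin d → ℤ)} {x y : Fin d → ℤ}
    (hx : x ∈ C) (hy : y ∈ C) : l1norm (x - y) ≤ l1diam C :=
  le_trans (Finset.le_sup (f := fun y => l1norm (x - y)) hy)
    (Finset.le_sup (f := fun x => C.sup fun y => l1norm (x - y)) hx)

lemma l1diam_le {d : ℕ} {C : Finset (Fin d → ℤ)} {m : ℕ}
    (h : ∀ x ∈ C, ∀ y ∈ C, l1norm (x - y) ≤ m) : l1diam C ≤ m :=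
  Finset.sup_le fun x hx => Finset.sup_le fun y hy => h x hx y hy

lemma l1diam_union {d : ℕ} {C C' : Finset (Fin d → ℤ)} {x0 y0 : Fin d → ℤ}
    (hx0 : x0 ∈ C) (hy0 : y0 ∈ C') :
    l1diam (C ∪ C') ≤ l1diam C + l1norm (x0 - y0) + l1diam C' := by
  apply l1diam_le
  intro x hx y hy
  rw [Finset.mem_union] at hx hy
  rcases hx with hx | hx <;> rcases hy with hy | hy
  · exact le_trans (le_l1diam hx hy) (by omega)
  · calc l1norm (x - y) ≤ l1norm (x - x0) + l1norm (x0 - y) := l1norm_tri _ _ _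
      _ ≤ l1norm (x - x0) + (l1norm (x0 - y0) + l1norm (y0 - y)) := by
          exact Nat.add_le_add_left (l1norm_tri _ _ _) _
      _ ≤ l1diam C + (l1norm (x0 - y0) + l1diam C') :=
          Nat.add_le_add (le_l1diam hx hx0) (Nat.add_le_add_left (le_l1diam hy0 hy) _)
      _ = l1diam C + l1norm (x0 - y0) + l1diam C' := by omega
  · rw [l1norm_sub_comm]
    calc l1norm (y - x) ≤ l1norm (y - x0) + l1norm (x0 - x) := l1norm_tri _ _ _
      _ ≤ l1norm (y - x0) + (l1norm (x0 - y0) + l1norm (y0 - x)) := by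
          exact Nat.add_le_add_left (l1norm_tri _ _ _) _
      _ ≤ l1diam C + (l1norm (x0 - y0) + l1diam C') :=
          Nat.add_le_add (le_l1diam hy hx0) (Nat.add_le_add_left (le_l1diam hy0 hx) _)
      _ = l1diam C + l1norm (x0 - y0) + l1diam C' := by omega
  · exact le_trans (le_l1diam hx hy) (by omega)

lemma merge_arith {L k a b g : ℕ} (hL : 0 < L)
    (ha : a ≤ (6 ^ k - 1) * L) (hb : b ≤ (6 ^ k - 1) * L)
    (hg : g < 4 * max (max a b) L) :
    a + g + b ≤ (6 ^ (k + 1) - 1) * L := by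
  have hE : 1 ≤ 6 ^ k := Nat.one_le_pow _ _ (by norm_num)
  have key : (6 ^ k - 1) * L + L = 6 ^ k * L := by
    have := Nat.sub_add_cancel hE
    nlinarith [Nat.sub_add_cancel hE]
  have h1 : a + L ≤ 6 ^ k * L := by omega
  have h2 : b + L ≤ 6 ^ k * L := by omega
  have hmax : max (max a b) L ≤ 6 ^ k * L := by
    have hLle : L ≤ 6 ^ k * L := Nat.le_mul_of_pos_left _ hE
    omega
  have h3 : g + 1 ≤ 4 * (6 ^ k * L) := by omega
  have key2 : (6 ^ (k + 1) - 1) * L + L = 6 ^ (k + 1) * L := by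
    have hE2 : 1 ≤ 6 ^ (k + 1) := Nat.one_le_pow _ _ (by norm_num)
    nlinarith [Nat.sub_add_cancel hE2]
  have h6 : 6 ^ (k + 1) * L = 6 * (6 ^ k * L) := by ring
  omega

lemma aux5 {d : ℕ} (L n : ℕ) (hL : 0 < L) :
    ∀ m : ℕ, ∀ P : Finset (Finset (Fin d → ℤ)),
    P.card ≤ m → P.card ≤ n →
    (∀ C ∈ P, C.Nonempty) →
    (∀ C ∈ P, ∀ C' ∈ P, C ≠ C' → Disjoint C C') →
    (∀ C ∈ P, l1diam C ≤ (6 ^ (n - P.card) - 1) * L) →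
    ∃ Q : Finset (Finset (Fin d → ℤ)),
      (∀ C ∈ Q, C.Nonempty) ∧
      (∀ C ∈ Q, ∀ C' ∈ Q, C ≠ C' → Disjoint C C') ∧
      Q.biUnion id = P.biUnion id ∧
      (∀ C ∈ Q, ∀ C' ∈ Q, C ≠ C' →
        ∀ x ∈ C, ∀ y ∈ C', 4 * max (max (l1diam C) (l1diam C')) L ≤ l1norm (x - y)) ∧
      (∀ C ∈ Q, l1diam C ≤ (6 ^ (n - Q.card) - 1) * L) := by
  intro m
  induction m with
  | zero =>
    intro P hm _ hne hdisj hdiam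
    refine ⟨P, hne, hdisj, rfl, ?_, hdiam⟩
    intro C hC
    have : P = ∅ := Finset.card_eq_zero.mp (Nat.le_zero.mp hm)
    simp [this] at hC
  | succ m ih =>
    intro P hm hn hne hdisj hdiam
    by_cases hsep : ∀ C ∈ P, ∀ C' ∈ P, C ≠ C' →
        ∀ x ∈ C, ∀ y ∈ C', 4 * max (max (l1diam C) (l1diam C')) L ≤ l1norm (x - y)
    · exact ⟨P, hne, hdisj, rfl, hsep, hdiam⟩
    · push_neg at hsep
      obtain ⟨C, hC, C', hC', hCC', x, hx, y, hy, hlt⟩ := hsep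
      have hC'e : C' ∈ P.erase C := Finset.mem_erase.mpr ⟨Ne.symm hCC', hC'⟩
      set R : Finset (Finset (Fin d → ℤ)) := (P.erase C).erase C' with hR
      have hRsub : R ⊆ P := (Finset.erase_subset _ _).trans (Finset.erase_subset _ _)
      have hRmem : ∀ B ∈ R, B ∈ P ∧ B ≠ C ∧ B ≠ C' := by
        intro B hB
        rw [hR, Finset.mem_erase, Finset.mem_erase] at hB
        exact ⟨hB.2.2, hB.2.1, hB.1⟩
      have hxu : x ∈ C ∪ C' := Finset.mem_union_left _ hx
      have hnotmem : C ∪ C' ∉ R := by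
        intro hmem
        obtain ⟨hBP, hBC, _⟩ := hRmem _ hmem
        have hdis := hdisj _ hBP _ hC hBC
        exact (Finset.disjoint_left.mp hdis hxu) hx
      set Q' : Finset (Finset (Fin d → ℤ)) := insert (C ∪ C') R with hQ'
      have hcard2 : 2 ≤ P.card := Finset.one_lt_card.mpr ⟨C, hC, C', hC', hCC'⟩
      have hcardR : R.card = P.card - 2 := by
        rw [hR, Finset.card_erase_of_mem hC'e, Finset.card_erase_of_mem hC]
        omega
      have hcardQ' : Q'.card = P.card - 1 := by
        rw [hQ', Finset.card_insert_of_notMem hnotmem, hcardR]; omega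
      -- invariants for Q'
      have hneQ' : ∀ B ∈ Q', B.Nonempty := by
        intro B hB
        rw [hQ', Finset.mem_insert] at hB
        rcases hB with rfl | hB
        · exact ⟨x, hxu⟩
        · exact hne _ (hRsub hB)
      have hdisjQ' : ∀ A ∈ Q', ∀ B ∈ Q', A ≠ B → Disjoint A B := by
        intro A hA B hB hAB
        rw [hQ', Finset.mem_insert] at hA hB
        rcases hA with rfl | hA <;> rcases hB with rfl | hB
        · exact absurd rfl hAB
        · obtain ⟨hBP, hBC, hBC'⟩ := hRmem _ hB
          rw [Finset.disjoint_union_left]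
          exact ⟨hdisj _ hC _ hBP (Ne.symm hBC), hdisj _ hC' _ hBP (Ne.symm hBC')⟩
        · obtain ⟨hAP, hAC, hAC'⟩ := hRmem _ hA
          rw [Finset.disjoint_union_right]
          exact ⟨hdisj _ hAP _ hC hAC, hdisj _ hAP _ hC' hAC'⟩
        · exact hdisj _ (hRsub hA) _ (hRsub hB) hAB
      have hbiQ' : Q'.biUnion id = P.biUnion id := by
        ext a
        simp only [hQ', hR, Finset.mem_biUnion, Finset.mem_insert, Finset.mem_erase,
          Finset.mem_union, id]
        constructor
        · rintro ⟨B, rfl | ⟨hBC', hBC, hBP⟩, haB⟩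
          · rcases Finset.mem_union.mp haB with h | h
            · exact ⟨C, hC, h⟩
            · exact ⟨C', hC', h⟩
          · exact ⟨B, hBP, haB⟩
        · rintro ⟨B, hBP, haB⟩
          by_cases h1 : B = C
          · exact ⟨C ∪ C', Or.inl rfl, Finset.mem_union_left _ (h1 ▸ haB)⟩
          by_cases h2 : B = C'
          · exact ⟨C ∪ C', Or.inl rfl, Finset.mem_union_right _ (h2 ▸ haB)⟩
          · exact ⟨B, Or.inr ⟨h2, h1, hBP⟩, haB⟩
      have hexp : n - Q'.card = (n - P.card) + 1 := by omega
      have hdiamQ' : ∀ B ∈ Q', l1diam B ≤ (6 ^ (n - Q'.card) - 1) * L := by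
        intro B hB
        rw [hexp]
        rw [hQ', Finset.mem_insert] at hB
        rcases hB with rfl | hB
        · calc l1diam (C ∪ C') ≤ l1diam C + l1norm (x - y) + l1diam C' :=
              l1diam_union hx hy
            _ ≤ (6 ^ ((n - P.card) + 1) - 1) * L :=
              merge_arith hL (hdiam _ hC) (hdiam _ hC') hlt
        · refine le_trans (hdiam _ (hRsub hB)) ?_
          apply Nat.mul_le_mul_right
          have : (6:ℕ) ^ (n - P.card) ≤ 6 ^ ((n - P.card) + 1) :=
            Nat.pow_le_pow_right (by norm_num) (by omega)
          omega
      obtain ⟨Q, hQ1, hQ2, hQ3, hQ4, hQ5⟩ :=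
        ih Q' (by omega) (by omega) hneQ' hdisjQ' hdiamQ'
      exact ⟨Q, hQ1, hQ2, hQ3.trans hbiQ', hQ4, hQ5⟩

lemma final_arith {n : ℕ} (hn : 1 ≤ n) : 6 ^ (n - 1) ≤ (5 * n) ^ n := by
  rcases n with _ | _ | m
  · omega
  · norm_num
  · have h1 : (6:ℕ) ^ (m + 1) ≤ (5 * (m + 2)) ^ (m + 1) :=
      Nat.pow_le_pow_left (by omega) _
    have h2 : (5 * (m + 2)) ^ (m + 1) ≤ (5 * (m + 2)) ^ (m + 2) :=
      Nat.pow_le_pow_right (by omega) (by omega)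
    simpa using h1.trans h2

/-- Existence of a partition of a finite set `Λ ⊆ ℤ^d` into `L`-clusters:
distinct blocks `C, C'` satisfy `dist(C, C') ≥ 4 max(diam C, diam C', L)`, and
every block `C` satisfies `diam C ≤ (5|Λ|)^{|Λ|} L`. -/
theorem stmt5 (d L : ℕ) (hL : 0 < L) (Λ : Finset (Fin d → ℤ)) :
    ∃ P : Finset (Finset (Fin d → ℤ)),
      (∀ C ∈ P, C.Nonempty) ∧
      (∀ C ∈ P, ∀ C' ∈ P, C ≠ C' → Disjoint C C') ∧
      (P.biUnion id = Λ) ∧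
      (∀ C ∈ P, ∀ C' ∈ P, C ≠ C' →
        ∀ x ∈ C, ∀ y ∈ C',
          4 * max (max (l1diam C) (l1diam C')) L ≤ l1norm (x - y)) ∧
      (∀ C ∈ P, l1diam C ≤ (5 * Λ.card) ^ Λ.card * L) := by
  set n := Λ.card with hn
  set P0 : Finset (Finset (Fin d → ℤ)) := Λ.image (fun x => ({x} : Finset _)) with hP0
  have hcard0 : P0.card = n := by
    rw [hP0, Finset.card_image_of_injective _ Finset.singleton_injective]
  have hmemP0 : ∀ B ∈ P0, ∃ x ∈ Λ, B = {x} := by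
    intro B hB
    rw [hP0, Finset.mem_image] at hB
    obtain ⟨x, hx, rfl⟩ := hB
    exact ⟨x, hx, rfl⟩
  have hdiam0 : ∀ B ∈ P0, l1diam B ≤ (6 ^ (n - P0.card) - 1) * L := by
    intro B hB
    obtain ⟨x, _, rfl⟩ := hmemP0 B hB
    have : l1diam ({x} : Finset (Fin d → ℤ)) = 0 := by
      simp [l1diam, l1norm, sub_self]
    omega
  have hne0 : ∀ B ∈ P0, B.Nonempty := by
    intro B hB; obtain ⟨x, _, rfl⟩ := hmemP0 B hB; exact ⟨x, Finset.mem_singleton_self x⟩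
  have hdisj0 : ∀ A ∈ P0, ∀ B ∈ P0, A ≠ B → Disjoint A B := by
    intro A hA B hB hAB
    obtain ⟨a, _, rfl⟩ := hmemP0 A hA
    obtain ⟨b, _, rfl⟩ := hmemP0 B hB
    simp only [Finset.disjoint_singleton]
    intro h; exact hAB (by rw [h])
  have hbi0 : P0.biUnion id = Λ := by
    ext a
    simp only [hP0, Finset.mem_biUnion, Finset.mem_image, id]
    constructor
    · rintro ⟨B, ⟨x, hx, rfl⟩, haB⟩
      rwa [Finset.mem_singleton.mp haB]
    · intro ha; exact ⟨{a}, ⟨a, ha, rfl⟩, Finset.mem_singleton_self a⟩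
  obtain ⟨Q, hQ1, hQ2, hQ3, hQ4, hQ5⟩ :=
    aux5 L n hL n P0 (le_of_eq hcard0) (le_of_eq hcard0) hne0 hdisj0 hdiam0
  refine ⟨Q, hQ1, hQ2, hQ3.trans hbi0, hQ4, ?_⟩
  intro C hC
  have hCne := hQ1 C hC
  obtain ⟨z, hz⟩ := hCne
  have hzΛ : z ∈ Λ := by
    rw [← hbi0, ← hQ3]
    exact Finset.mem_biUnion.mpr ⟨C, hC, hz⟩
  have hn1 : 1 ≤ n := by
    rw [hn]; exact Finset.card_pos.mpr ⟨z, hzΛ⟩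
  have hQcard : 1 ≤ Q.card := Finset.card_pos.mpr ⟨C, hC⟩
  refine le_trans (hQ5 C hC) ?_
  apply Nat.mul_le_mul_right
  calc 6 ^ (n - Q.card) - 1 ≤ 6 ^ (n - 1) := by
        exact le_trans (Nat.sub_le _ _)
          (Nat.pow_le_pow_right (by norm_num) (by omega))
    _ ≤ (5 * n) ^ n := final_arith hn1
end
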